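/- arXiv:2308.08086 — 3 statements merged into one kernel-verified Lean document; each statement's English description precedes it below -/
import Mathlib

section
/- Let D_lo, D_hi ∈ ℝ^{n×p}, d_lo, d_hi ∈ ℝⁿ, σ_w ≥ 0, y ∈ ℝᵖ, matrices Φ_1,…,Φ_t ∈ ℝ^{p×n} and Ψ_1,…,Ψ_t ∈ ℝ^{n×n}, and ψ ∈ ℝⁿ with ψ_i > 0. Suppose for every i: σ_w + e_iᵀ(D_hi y + d_hi) + Σ_{j=1}^t ‖e_iᵀ(D_hi Φ_j − Ψ_j)‖₁ ≤ ψ_i and σ_w − e_iᵀ(D_lo y + d_lo) + Σ_{j=1}^t ‖e_iᵀ(D_lo Φ_j − Ψ_j)‖₁ ≤ ψ_i. Then for all w̃_1,…,w̃_t ∈ ℝⁿ with ‖w̃_j‖_∞ ≤ 1, all w ∈ ℝⁿ with ‖w‖_∞ ≤ σ_w, and all Δ ∈ ℝⁿ satisfying D_lo (y + Σ_j Φ_j w̃_j) + d_lo ≤ Δ ≤ D_hi (y + Σ_j Φ_j w̃_j) + d_hi, there exists w̃ ∈ ℝⁿ with ‖w̃‖_∞ ≤ 1 such that Δ + w = Σ_{j=1}^t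 Ψ_j w̃_j + diag(ψ) w̃. -/
open Matrix


lemma stmt5_single_vecMul {n m : ℕ} (M : Matrix (Fin n) (Fin m) ℝ) (i : Fin n) (l : Fin m) :
    (Matrix.vecMul (Pi.single i 1) M) l = M i l := by
  simp [Matrix.vecMul, dotProduct, Pi.single_apply, ite_mul]

lemma stmt5_abs_mulVec {n m : ℕ} (M : Matrix (Fin n) (Fin m) ℝ) (v : Fin m → ℝ)
    (hv : ∀ l, |v l| ≤ 1) (i : Fin n) :
    |(M.mulVec v) i| ≤ ∑ l, |M i l| := by
  calc |(M.mulVec v) i| = |∑ l, M i l * v l| := by rfl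
    _ ≤ ∑ l, |M i l * v l| := Finset.abs_sum_le_sum_abs _ _
    _ ≤ ∑ l, |M i l| := by
        refine Finset.sum_le_sum fun l _ => ?_
        rw [abs_mul]
        calc |M i l| * |v l| ≤ |M i l| * 1 := by
              exact mul_le_mul_of_nonneg_left (hv l) (abs_nonneg _)
          _ = |M i l| := mul_one _

theorem stmt_5 {n p t : ℕ} (D_lo D_hi : Matrix (Fin n) (Fin p) ℝ)
    (d_lo d_hi : Fin n → ℝ) (σw : ℝ) (hσ : 0 ≤ σw) (y : Fin p → ℝ)
    (Φ : Fin t → Matrix (Fin p) (Fin n) ℝ) (Ψ : Fin t → Matrix (Fin n) (Fin n) ℝ)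
    (ψ : Fin n → ℝ) (hψ : ∀ i, 0 < ψ i)
    (h1 : ∀ i, σw + (D_hi.mulVec y + d_hi) i
        + ∑ j, ∑ l, |(Matrix.vecMul (Pi.single i 1) (D_hi * Φ j - Ψ j)) l| ≤ ψ i)
    (h2 : ∀ i, σw - (D_lo.mulVec y + d_lo) i
        + ∑ j, ∑ l, |(Matrix.vecMul (Pi.single i 1) (D_lo * Φ j - Ψ j)) l| ≤ ψ i) :
    ∀ wt : Fin t → Fin n → ℝ, (∀ j l, |wt j l| ≤ 1) →
    ∀ w : Fin n → ℝ, (∀ i, |w i| ≤ σw) →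
    ∀ Δ : Fin n → ℝ,
      (∀ i, (D_lo.mulVec (y + ∑ j, (Φ j).mulVec (wt j)) + d_lo) i ≤ Δ i ∧
            Δ i ≤ (D_hi.mulVec (y + ∑ j, (Φ j).mulVec (wt j)) + d_hi) i) →
      ∃ w' : Fin n → ℝ, (∀ i, |w' i| ≤ 1) ∧
        Δ + w = ∑ j, (Ψ j).mulVec (wt j) + (Matrix.diagonal ψ).mulVec w' := by
  intro wt hwt w hw Δ hΔ
  set S : Fin n → ℝ := fun i => Δ i + w i - ∑ j, ((Ψ j).mulVec (wt j)) i with hS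
  -- expansion of mulVec of the sum
  have hexp : ∀ (D : Matrix (Fin n) (Fin p) ℝ) (i : Fin n),
      (D.mulVec (y + ∑ j, (Φ j).mulVec (wt j))) i
        = (D.mulVec y) i + ∑ j, ((D * Φ j).mulVec (wt j)) i := by
    intro D i
    rw [Matrix.mulVec_add, Pi.add_apply]
    congr 1
    rw [show (D.mulVec (∑ j, (Φ j).mulVec (wt j))) = ∑ j, D.mulVec ((Φ j).mulVec (wt j)) from ?_]
    · simp [Matrix.mulVec_mulVec]
    · exact map_sum D.mulVecLin _ _
  have key : ∀ i, |S i| ≤ ψ i := by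
    intro i
    rw [abs_le]
    have hhi := (hΔ i).2
    have hlo := (hΔ i).1
    have hb1 : ∑ j, (((D_hi * Φ j - Ψ j)).mulVec (wt j)) i
        ≤ ∑ j, ∑ l, |(Matrix.vecMul (Pi.single i 1) (D_hi * Φ j - Ψ j)) l| := by
      refine Finset.sum_le_sum fun j _ => ?_
      calc ((D_hi * Φ j - Ψ j).mulVec (wt j)) i ≤ |((D_hi * Φ j - Ψ j).mulVec (wt j)) i| :=
            le_abs_self _
        _ ≤ ∑ l, |(D_hi * Φ j - Ψ j) i l| := stmt5_abs_mulVec _ _ (hwt j) i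
        _ = _ := by simp [stmt5_single_vecMul]
    have hb2 : -(∑ j, ∑ l, |(Matrix.vecMul (Pi.single i 1) (D_lo * Φ j - Ψ j)) l|)
        ≤ ∑ j, (((D_lo * Φ j - Ψ j)).mulVec (wt j)) i := by
      rw [← Finset.sum_neg_distrib]
      refine Finset.sum_le_sum fun j _ => ?_
      have := stmt5_abs_mulVec (D_lo * Φ j - Ψ j) (wt j) (hwt j) i
      have h' := neg_abs_le (((D_lo * Φ j - Ψ j)).mulVec (wt j) i)
      have heq : (∑ l, |(Matrix.vecMul (Pi.single i 1) (D_lo * Φ j - Ψ j)) l|)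
          = ∑ l, |(D_lo * Φ j - Ψ j) i l| := by simp [stmt5_single_vecMul]
      rw [heq]; linarith
    have hsub : ∀ (D : Matrix (Fin n) (Fin p) ℝ) j,
        (((D * Φ j - Ψ j)).mulVec (wt j)) i
          = ((D * Φ j).mulVec (wt j)) i - ((Ψ j).mulVec (wt j)) i := by
      intro D j
      rw [Matrix.sub_mulVec]; rfl
    have hw1 : w i ≤ σw := (abs_le.mp (hw i)).2
    have hw2 : -σw ≤ w i := (abs_le.mp (hw i)).1
    constructor
    · -- lower bound
      have := h2 i
      have e := hexp D_lo i
      have hsum : ∑ j, (((D_lo * Φ j - Ψ j)).mulVec (wt j)) i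
          = ∑ j, ((D_lo * Φ j).mulVec (wt j)) i - ∑ j, ((Ψ j).mulVec (wt j)) i := by
        rw [← Finset.sum_sub_distrib]
        exact Finset.sum_congr rfl fun j _ => hsub D_lo j
      simp only [hS, Pi.add_apply] at hlo e ⊢
      rw [e] at hlo
      simp only [Pi.add_apply] at this
      linarith [hb2, hsum]
    · -- upper bound
      have := h1 i
      have e := hexp D_hi i
      have hsum : ∑ j, (((D_hi * Φ j - Ψ j)).mulVec (wt j)) i
          = ∑ j, ((D_hi * Φ j).mulVec (wt j)) i - ∑ j, ((Ψ j).mulVec (wt j)) i := by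
        rw [← Finset.sum_sub_distrib]
        exact Finset.sum_congr rfl fun j _ => hsub D_hi j
      simp only [hS, Pi.add_apply] at hhi e ⊢
      rw [e] at hhi
      simp only [Pi.add_apply] at this
      linarith [hb1, hsum]
  refine ⟨fun i => S i / ψ i, fun i => ?_, ?_⟩
  · rw [abs_div, abs_of_pos (hψ i), div_le_one (hψ i)]
    exact key i
  · funext i
    simp only [Pi.add_apply, Finset.sum_apply, Matrix.mulVec_diagonal]
    have : ψ i * (S i / ψ i) = S i := by
      rw [mul_div_assoc', mul_div_cancel_left₀ _ (hψ i).ne']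
    rw [this, hS]
    ring
end

section
/- Let Z, A, B, K be matrices of compatible dimensions such that Z(A + BK) is nilpotent. Define Φ_x = (I − Z(A+BK))^{-1} and Φ_u = K Φ_x. Then (I − ZA)Φ_x − ZB Φ_u = I. -/
open Matrix

theorem stmt_7 {n m : ℕ} (Z A : Matrix (Fin n) (Fin n) ℝ)
    (B : Matrix (Fin n) (Fin m) ℝ) (K : Matrix (Fin m) (Fin n) ℝ)
    (hnil : IsNilpotent (Z * (A + B * K))) :
    (1 - Z * A) * (1 - Z * (A + B * K))⁻¹
      - Z * B * (K * (1 - Z * (A + B * K))⁻¹) = 1 := by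
  have hu : IsUnit (1 - Z * (A + B * K)) := IsNilpotent.isUnit_one_sub hnil
  have h : (1 - Z * A) * (1 - Z * (A + B * K))⁻¹
      - Z * B * (K * (1 - Z * (A + B * K))⁻¹)
      = (1 - Z * (A + B * K)) * (1 - Z * (A + B * K))⁻¹ := by
    simp only [Matrix.mul_assoc]
    noncomm_ring
    simp only [Matrix.mul_assoc]
  rw [h, Matrix.mul_nonsing_inv _ (Matrix.isUnit_iff_isUnit_det _ |>.mp hu)]
end

section
/- Let A, B, Z be matrices with Z A and Z B of compatible dimension, and suppose Φ_x, Φ_u satisfy (I − ZA)Φ_x − ZB Φ_u = I with Φ_x invertible. Define K = Φ_u Φ_x^{-1}. Then (I − Z(A + BK)) Φ_x = I, i.e., Φ_x = (I − Z(A+BK))^{-1} and Φ_u = K(I − Z(A+BK))^{-1}. -/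
open Matrix

theorem stmt_8 {n m : ℕ} (Z A : Matrix (Fin n) (Fin n) ℝ)
    (B : Matrix (Fin n) (Fin m) ℝ)
    (Φx : Matrix (Fin n) (Fin n) ℝ) (Φu : Matrix (Fin m) (Fin n) ℝ)
    (hconstr : (1 - Z * A) * Φx - Z * B * Φu = 1)
    (hinv : Invertible Φx) :
    (1 - Z * (A + B * (Φu * Φx⁻¹))) * Φx = 1 ∧
      Φx = (1 - Z * (A + B * (Φu * Φx⁻¹)))⁻¹ ∧
      Φu = (Φu * Φx⁻¹) * (1 - Z * (A + B * (Φu * Φx⁻¹)))⁻¹ := by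
  have hxinv : Φx⁻¹ * Φx = 1 := inv_mul_of_invertible Φx
  have key : (1 - Z * (A + B * (Φu * Φx⁻¹))) * Φx = 1 := by
    have : (1 - Z * (A + B * (Φu * Φx⁻¹))) * Φx
        = (1 - Z * A) * Φx - Z * B * (Φu * (Φx⁻¹ * Φx)) := by
      simp only [sub_mul, mul_add, add_mul, one_mul, Matrix.mul_assoc]
      abel
    rw [this, hxinv, Matrix.mul_one, hconstr]
  refine ⟨key, (inv_eq_right_inv key).symm, ?_⟩
  rw [inv_eq_right_inv key, Matrix.mul_assoc, hxinv, Matrix.mul_one]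
end
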